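/- Every finitely generated free group is faithfully represented by a subgroup of the modular group PSL(2, ℤ): for every n ∈ ℕ there exists an injective group homomorphism from the free group of rank n into PSL(2, ℤ). -/

import Mathlib

open Matrix
namespace PSL2ZEmbed
local notation "SL2Z" => Matrix.SpecialLinearGroup (Fin 2) ℤ
def V : Type := {v : Fin 2 → ℤ // v ≠ 0}

noncomputable instance : MulAction SL2Z V where
  smul A v := ⟨A.1.mulVec v.1, by
    intro h
    apply v.2
    have h2 : (A⁻¹ : SL2Z).1.mulVec (A.1.mulVec v.1) = (A⁻¹ : SL2Z).1.mulVec 0 := by rw [h]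
    rwa [Matrix.mulVec_mulVec, ← Matrix.SpecialLinearGroup.coe_mul, inv_mul_cancel,
      Matrix.SpecialLinearGroup.coe_one, Matrix.one_mulVec, Matrix.mulVec_zero] at h2⟩
  one_smul v := Subtype.ext (by
    show (1 : SL2Z).1.mulVec v.1 = v.1
    rw [Matrix.SpecialLinearGroup.coe_one, Matrix.one_mulVec])
  mul_smul A B v := Subtype.ext (by
    show (A * B).1.mulVec v.1 = A.1.mulVec (B.1.mulVec v.1)
    rw [Matrix.mulVec_mulVec, Matrix.SpecialLinearGroup.coe_mul])

lemma smul_val0 (A : SL2Z) (v : V) :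
    (A • v).1 0 = A.1 0 0 * v.1 0 + A.1 0 1 * v.1 1 := by
  show A.1.mulVec v.1 0 = _
  simp [Matrix.mulVec, dotProduct, Fin.sum_univ_two]

lemma smul_val1 (A : SL2Z) (v : V) :
    (A • v).1 1 = A.1 1 0 * v.1 0 + A.1 1 1 * v.1 1 := by
  show A.1.mulVec v.1 1 = _
  simp [Matrix.mulVec, dotProduct, Fin.sum_univ_two]

def Tm : SL2Z := ⟨!![1, 7; 0, 1], by norm_num [Matrix.det_fin_two_of]⟩
def Mm : SL2Z := ⟨!![1, 4; 4, 17], by norm_num [Matrix.det_fin_two_of]⟩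
def Mm' : SL2Z := ⟨!![17, -4; -4, 1], by norm_num [Matrix.det_fin_two_of]⟩

lemma Mm_inv : Mm⁻¹ = Mm' := by
  apply inv_eq_of_mul_eq_one_right
  apply Subtype.ext
  show (!![1, 4; 4, 17] * !![17, -4; -4, 1] : Matrix (Fin 2) (Fin 2) ℤ) = 1
  rw [Matrix.mul_fin_two, Matrix.one_fin_two]; norm_num

lemma Tm_pow_coe (k : ℕ) : (Tm ^ k).1 = !![1, 7 * (k : ℤ); 0, 1] := by
  induction k with
  | zero => simp [Matrix.SpecialLinearGroup.coe_one, Matrix.one_fin_two]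
  | succ k ih =>
      rw [pow_succ, Matrix.SpecialLinearGroup.coe_mul, ih]
      show _ * !![1, 7; 0, 1] = _
      rw [Matrix.mul_fin_two]
      push_cast
      ring_nf

def Tmk' (k : ℕ) : SL2Z := ⟨!![1, -(7 * (k : ℤ)); 0, 1], by norm_num [Matrix.det_fin_two_of]⟩

lemma Tm_pow_inv (k : ℕ) : (Tm ^ k)⁻¹ = Tmk' k := by
  apply inv_eq_of_mul_eq_one_right
  apply Subtype.ext
  show (Tm ^ k).1 * (Tmk' k).1 = 1
  rw [Tm_pow_coe]
  show _ * !![1, -(7 * (k : ℤ)); 0, 1] = _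
  rw [Matrix.mul_fin_two, Matrix.one_fin_two]; norm_num

/-- slope of a vector -/
def sl (v : V) : ℚ := (v.1 0 : ℚ) / (v.1 1 : ℚ)

def X (k : ℕ) : Set V :=
  {v | v.1 1 ≠ 0 ∧ 7 * (k : ℚ) + 1/7 < sl v ∧ sl v < 7 * (k : ℚ) + 1/3}

def Y (k : ℕ) : Set V :=
  {v | v.1 1 ≠ 0 ∧ 7 * (k : ℚ) - 11/2 < sl v ∧ sl v < 7 * (k : ℚ) - 7/2}

lemma val0_ne_of_val1_eq (v : V) (h : v.1 1 = 0) : v.1 0 ≠ 0 := by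
  intro h0
  apply v.2
  funext i
  fin_cases i <;> assumption

lemma Mm_smul0 (v : V) : (Mm • v).1 0 = v.1 0 + 4 * v.1 1 := by
  rw [smul_val0]; simp [Mm]

lemma Mm_smul1 (v : V) : (Mm • v).1 1 = 4 * v.1 0 + 17 * v.1 1 := by
  rw [smul_val1]; simp [Mm]

lemma Mm'_smul0 (v : V) : (Mm' • v).1 0 = 17 * v.1 0 - 4 * v.1 1 := by
  rw [smul_val0]; simp [Mm']; ring

lemma Mm'_smul1 (v : V) : (Mm' • v).1 1 = -(4 * v.1 0) + v.1 1 := by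
  rw [smul_val1]; simp [Mm']

lemma Tmk'_smul0 (k : ℕ) (v : V) : (Tmk' k • v).1 0 = v.1 0 - 7 * k * v.1 1 := by
  rw [smul_val0]; simp [Tmk']; ring

lemma Tmk'_smul1 (k : ℕ) (v : V) : (Tmk' k • v).1 1 = v.1 1 := by
  rw [smul_val1]; simp [Tmk']

lemma coreX (v : V) (hv : v ∉ Y 0) : Mm • v ∈ X 0 := by
  rcases eq_or_ne (v.1 1) 0 with hy | hy
  · -- y = 0 case
    have hx : v.1 0 ≠ 0 := val0_ne_of_val1_eq v hy
    have hxq : (v.1 0 : ℚ) ≠ 0 := Int.cast_ne_zero.mpr hx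
    have h1 : (Mm • v).1 1 = 4 * v.1 0 := by rw [Mm_smul1, hy]; ring
    have h0 : (Mm • v).1 0 = v.1 0 := by rw [Mm_smul0, hy]; ring
    have hsl : sl (Mm • v) = 1/4 := by
      rw [sl, h0, h1]
      push_cast
      rw [show (v.1 0 : ℚ) = 1 * (v.1 0 : ℚ) by ring, show (4:ℚ) * (1 * (v.1 0:ℚ)) = 4 * (v.1 0:ℚ) by ring,
        mul_div_mul_right _ _ hxq]
    refine ⟨by rw [h1]; exact mul_ne_zero (by norm_num) hx, ?_, ?_⟩ <;> rw [hsl] <;> norm_num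
  · -- y ≠ 0
    have hyq : (v.1 1 : ℚ) ≠ 0 := Int.cast_ne_zero.mpr hy
    set s : ℚ := sl v with hs
    have hx : (v.1 0 : ℚ) = s * v.1 1 := (div_mul_cancel₀ _ hyq).symm
    have hnum : ((Mm • v).1 0 : ℚ) = (s + 4) * v.1 1 := by
      rw [Mm_smul0]; push_cast; rw [hx]; ring
    have hden : ((Mm • v).1 1 : ℚ) = (4 * s + 17) * v.1 1 := by
      rw [Mm_smul1]; push_cast; rw [hx]; ring
    have hsout : s ≤ -(11/2) ∨ -(7/2) ≤ s := by
      by_contra hcon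
      push_neg at hcon
      exact hv ⟨hy, by push_cast; linarith [hcon.1], by push_cast; linarith [hcon.2]⟩
    have hslope : sl (Mm • v) = (s + 4) / (4 * s + 17) := by
      rw [sl, hnum, hden, mul_div_mul_right _ _ hyq]
    rcases hsout with h | h
    · have hd : 4 * s + 17 < 0 := by linarith
      refine ⟨?_, ?_, ?_⟩
      · intro h0
        rw [h0] at hden
        exact mul_ne_zero (ne_of_lt hd) hyq (by exact_mod_cast hden.symm)
      · rw [hslope, lt_div_iff_of_neg hd]; push_cast; linarith
      · rw [hslope, div_lt_iff_of_neg hd]; push_cast; linarith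
    · have hd : 0 < 4 * s + 17 := by linarith
      refine ⟨?_, ?_, ?_⟩
      · intro h0
        rw [h0] at hden
        exact mul_ne_zero (ne_of_gt hd) hyq (by exact_mod_cast hden.symm)
      · rw [hslope, lt_div_iff₀ hd]; push_cast; linarith
      · rw [hslope, div_lt_iff₀ hd]; push_cast; linarith

lemma coreY (v : V) (hv : v ∉ X 0) : Mm⁻¹ • v ∈ Y 0 := by
  rw [Mm_inv]
  rcases eq_or_ne (v.1 1) 0 with hy | hy
  · have hx : v.1 0 ≠ 0 := val0_ne_of_val1_eq v hy
    have hxq : (v.1 0 : ℚ) ≠ 0 := Int.cast_ne_zero.mpr hx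
    have h0 : (Mm' • v).1 0 = 17 * v.1 0 := by rw [Mm'_smul0, hy]; ring
    have h1 : (Mm' • v).1 1 = -(4 * v.1 0) := by rw [Mm'_smul1, hy]; ring
    have hsl : sl (Mm' • v) = -(17/4) := by
      rw [sl, h0, h1]
      push_cast
      rw [show (17 * (v.1 0:ℚ)) = 17 * (v.1 0 : ℚ) by ring,
        show (-(4 * (v.1 0:ℚ))) = (-4) * (v.1 0 : ℚ) by ring,
        mul_div_mul_right _ _ hxq]
      norm_num
    refine ⟨by rw [h1]; simpa using hx, ?_, ?_⟩ <;> rw [hsl] <;> norm_num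
  · have hyq : (v.1 1 : ℚ) ≠ 0 := Int.cast_ne_zero.mpr hy
    set s : ℚ := sl v with hs
    have hx : (v.1 0 : ℚ) = s * v.1 1 := (div_mul_cancel₀ _ hyq).symm
    have hnum : ((Mm' • v).1 0 : ℚ) = (17 * s - 4) * v.1 1 := by
      rw [Mm'_smul0]; push_cast; rw [hx]; ring
    have hden : ((Mm' • v).1 1 : ℚ) = (-(4 * s) + 1) * v.1 1 := by
      rw [Mm'_smul1]; push_cast; rw [hx]; ring
    have hsout : s ≤ 1/7 ∨ 1/3 ≤ s := by
      by_contra hcon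
      push_neg at hcon
      exact hv ⟨hy, by push_cast; linarith [hcon.1], by push_cast; linarith [hcon.2]⟩
    have hslope : sl (Mm' • v) = (17 * s - 4) / (-(4 * s) + 1) := by
      rw [sl, hnum, hden, mul_div_mul_right _ _ hyq]
    rcases hsout with h | h
    · have hd : 0 < -(4 * s) + 1 := by linarith
      refine ⟨?_, ?_, ?_⟩
      · intro h0
        rw [h0] at hden
        exact mul_ne_zero (ne_of_gt hd) hyq (by exact_mod_cast hden.symm)
      · rw [hslope, lt_div_iff₀ hd]; push_cast; linarith
      · rw [hslope, div_lt_iff₀ hd]; push_cast; linarith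
    · have hd : -(4 * s) + 1 < 0 := by linarith
      refine ⟨?_, ?_, ?_⟩
      · intro h0
        rw [h0] at hden
        exact mul_ne_zero (ne_of_lt hd) hyq (by exact_mod_cast hden.symm)
      · rw [hslope, lt_div_iff_of_neg hd]; push_cast; linarith
      · rw [hslope, div_lt_iff_of_neg hd]; push_cast; linarith

lemma shift_sl (k : ℕ) (v : V) (hy : v.1 1 ≠ 0) :
    sl ((Tm ^ k)⁻¹ • v) = sl v - 7 * k := by
  have hyq : (v.1 1 : ℚ) ≠ 0 := Int.cast_ne_zero.mpr hy
  rw [Tm_pow_inv, sl, Tmk'_smul0, Tmk'_smul1]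
  push_cast
  rw [sub_div, sl]
  congr 1
  field_simp

lemma shift_val1 (k : ℕ) (v : V) : ((Tm ^ k)⁻¹ • v).1 1 = v.1 1 := by
  rw [Tm_pow_inv, Tmk'_smul1]

lemma shift_mem_X (k : ℕ) (v : V) : v ∈ X k ↔ (Tm ^ k)⁻¹ • v ∈ X 0 := by
  constructor
  · rintro ⟨h1, h2, h3⟩
    refine ⟨by rw [shift_val1]; exact h1, ?_, ?_⟩ <;> rw [shift_sl k v h1] <;> push_cast <;>
      [skip; skip] <;> linarith
  · rintro ⟨h1, h2, h3⟩
    rw [shift_val1] at h1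
    rw [shift_sl k v h1] at h2 h3
    refine ⟨h1, ?_, ?_⟩ <;> push_cast at h2 h3 ⊢ <;> linarith

lemma shift_mem_Y (k : ℕ) (v : V) : v ∈ Y k ↔ (Tm ^ k)⁻¹ • v ∈ Y 0 := by
  constructor
  · rintro ⟨h1, h2, h3⟩
    refine ⟨by rw [shift_val1]; exact h1, ?_, ?_⟩ <;> rw [shift_sl k v h1] <;> push_cast <;>
      [skip; skip] <;> linarith
  · rintro ⟨h1, h2, h3⟩
    rw [shift_val1] at h1
    rw [shift_sl k v h1] at h2 h3
    refine ⟨h1, ?_, ?_⟩ <;> push_cast at h2 h3 ⊢ <;> linarith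

def gen (k : ℕ) : SL2Z := Tm ^ k * Mm * (Tm ^ k)⁻¹

lemma gen_smul_mem_X (k : ℕ) (v : V) (hv : v ∉ Y k) : gen k • v ∈ X k := by
  rw [shift_mem_X]
  have hc : (Tm ^ k)⁻¹ * (Tm ^ k * Mm * (Tm ^ k)⁻¹) = Mm * (Tm ^ k)⁻¹ := by group
  rw [gen, ← mul_smul, hc, mul_smul]
  exact coreX _ (fun hmem => hv ((shift_mem_Y k v).mpr hmem))

lemma gen_inv_smul_mem_Y (k : ℕ) (v : V) (hv : v ∉ X k) : (gen k)⁻¹ • v ∈ Y k := by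
  rw [shift_mem_Y]
  have hc : (Tm ^ k)⁻¹ * (Tm ^ k * Mm * (Tm ^ k)⁻¹)⁻¹ = Mm⁻¹ * (Tm ^ k)⁻¹ := by group
  rw [gen, ← mul_smul, hc, mul_smul]
  exact coreY _ (fun hmem => hv ((shift_mem_X k v).mpr hmem))

lemma X_nonempty (k : ℕ) : (X k).Nonempty := by
  refine ⟨⟨![28 * (k : ℤ) + 1, 4], fun h => by simpa using congrFun h 1⟩, ?_, ?_, ?_⟩
  · show (4 : ℤ) ≠ 0; norm_num
  · show 7 * (k:ℚ) + 1/7 < ((28 * (k:ℤ) + 1 : ℤ) : ℚ) / ((4:ℤ) : ℚ)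
    push_cast
    rw [lt_div_iff₀ (by norm_num : (0:ℚ) < 4)]
    linarith
  · show ((28 * (k:ℤ) + 1 : ℤ) : ℚ) / ((4:ℤ) : ℚ) < 7 * (k:ℚ) + 1/3
    push_cast
    rw [div_lt_iff₀ (by norm_num : (0:ℚ) < 4)]
    linarith

lemma X_disj_X {i j : ℕ} (hij : i ≠ j) : Disjoint (X i) (X j) := by
  rw [Set.disjoint_left]
  rintro v ⟨_, h2, h3⟩ ⟨_, h5, h6⟩
  rcases lt_or_gt_of_ne hij with h | h
  · have : (i:ℚ) + 1 ≤ (j:ℚ) := by exact_mod_cast h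
    linarith
  · have : (j:ℚ) + 1 ≤ (i:ℚ) := by exact_mod_cast h
    linarith

lemma Y_disj_Y {i j : ℕ} (hij : i ≠ j) : Disjoint (Y i) (Y j) := by
  rw [Set.disjoint_left]
  rintro v ⟨_, h2, h3⟩ ⟨_, h5, h6⟩
  rcases lt_or_gt_of_ne hij with h | h
  · have : (i:ℚ) + 1 ≤ (j:ℚ) := by exact_mod_cast h
    linarith
  · have : (j:ℚ) + 1 ≤ (i:ℚ) := by exact_mod_cast h
    linarith

lemma X_disj_Y (i j : ℕ) : Disjoint (X i) (Y j) := by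
  rw [Set.disjoint_left]
  rintro v ⟨_, h2, h3⟩ ⟨_, h5, h6⟩
  -- 7i + 1/7 < s < 7i + 1/3 and 7j - 11/2 < s < 7j - 7/2
  rcases le_or_gt j i with h | h
  · have : (j:ℚ) ≤ (i:ℚ) := by exact_mod_cast h
    linarith
  · have : (i:ℚ) + 1 ≤ (j:ℚ) := by exact_mod_cast h
    linarith

lemma sl_injective_lift (m : ℕ) :
    Function.Injective
      (FreeGroup.lift (fun i : Fin (m + 2) => gen (i : ℕ)) :
        FreeGroup (Fin (m + 2)) →* SL2Z) := by
  apply FreeGroup.injective_lift_of_ping_pong (fun i : Fin (m+2) => gen (i : ℕ))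
    (fun i : Fin (m+2) => X (i : ℕ)) (fun i : Fin (m+2) => Y (i : ℕ))
  · exact fun i => X_nonempty _
  · intro i j hij
    exact X_disj_X (fun h => hij (Fin.ext h))
  · intro i j hij
    exact Y_disj_Y (fun h => hij (Fin.ext h))
  · intro i j
    exact X_disj_Y _ _
  · intro i v hv
    rw [Set.mem_smul_set] at hv
    obtain ⟨w, hw, rfl⟩ := hv
    exact gen_smul_mem_X _ _ hw
  · intro i v hv
    rw [Set.mem_smul_set] at hv
    obtain ⟨w, hw, rfl⟩ := hv
    exact gen_inv_smul_mem_Y _ _ hw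

/-- reduction mod 4 -/
noncomputable def red : SL2Z →* Matrix.SpecialLinearGroup (Fin 2) (ZMod 4) :=
  Matrix.SpecialLinearGroup.map (Int.castRingHom (ZMod 4))

lemma red_Mm : red Mm = 1 := by
  apply Subtype.ext
  show (Int.castRingHom (ZMod 4)).mapMatrix (Mm.1) = 1
  ext i j
  fin_cases i <;> fin_cases j <;>
    simp [Mm, RingHom.mapMatrix_apply, Matrix.map_apply, Matrix.one_apply] <;> decide

lemma red_gen (k : ℕ) : red (gen k) = 1 := by
  simp [gen, _root_.map_mul, _root_.map_inv, red_Mm]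

lemma red_lift (m : ℕ) (w : FreeGroup (Fin (m + 2))) :
    red ((FreeGroup.lift (fun i : Fin (m + 2) => gen (i : ℕ))) w) = 1 := by
  have h : red.comp (FreeGroup.lift (fun i : Fin (m + 2) => gen (i : ℕ))) =
      (1 : FreeGroup (Fin (m + 2)) →* Matrix.SpecialLinearGroup (Fin 2) (ZMod 4)) := by
    apply FreeGroup.ext_hom
    intro i
    simp [red_gen]
  exact DFunLike.congr_fun h w

end PSL2ZEmbed

open PSL2ZEmbed in
/-- Every finitely generated free group is faithfully represented by a subgroup of the
modular group `PSL(2,ℤ)`: for every `n` there is an injective group homomorphism from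
the free group of rank `n` into `PSL(2,ℤ)`. -/
theorem freeGroup_embeds_in_PSL2Z (n : ℕ) :
    ∃ φ : FreeGroup (Fin n) →* Matrix.ProjectiveSpecialLinearGroup (Fin 2) ℤ,
      Function.Injective ⇑φ := by
  classical
  set ψ : FreeGroup (Fin (n + 2)) →* Matrix.SpecialLinearGroup (Fin 2) ℤ :=
    FreeGroup.lift (fun i : Fin (n + 2) => gen (i : ℕ)) with hψdef
  have hψ : Function.Injective ψ := sl_injective_lift n
  -- embed `FreeGroup (Fin n)` into `FreeGroup (Fin (n+2))`
  set θ : FreeGroup (Fin n) →* FreeGroup (Fin (n + 2)) :=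
    FreeGroup.map (Fin.castAdd 2) with hθdef
  have hθ : Function.Injective θ := by
    rcases Nat.eq_zero_or_pos n with hn | hn
    · subst hn
      intro a b _
      exact Subsingleton.elim a b
    · set r : Fin (n + 2) → Fin n :=
        fun j => if h : (j : ℕ) < n then ⟨j, h⟩ else ⟨0, hn⟩ with hr
      have hret : ∀ x, FreeGroup.map r (θ x) = x := by
        intro x
        rw [hθdef]
        rw [FreeGroup.map.comp]
        have : (r ∘ Fin.castAdd 2) = id := by
          funext i
          simp [hr, Fin.castAdd, i.isLt]
        rw [this]
        exact FreeGroup.map.id x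
      exact Function.LeftInverse.injective hret
    -- final homomorphism
  refine ⟨(QuotientGroup.mk' (Subgroup.center (Matrix.SpecialLinearGroup (Fin 2) ℤ))).comp
    (ψ.comp θ), ?_⟩
  rw [injective_iff_map_eq_one]
  intro w hw
  have hcent : ψ (θ w) ∈ Subgroup.center (Matrix.SpecialLinearGroup (Fin 2) ℤ) := by
    rw [MonoidHom.comp_apply, MonoidHom.comp_apply, QuotientGroup.mk'_apply,
      QuotientGroup.eq_one_iff] at hw
    exact hw
  obtain ⟨rr, hr2, hrs⟩ := Matrix.SpecialLinearGroup.mem_center_iff.mp hcent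
  have hr2' : rr * rr = 1 := by
    have : rr ^ 2 = 1 := by simpa using hr2
    rwa [sq] at this
  rcases Int.isUnit_iff.mp (IsUnit.of_mul_eq_one (a := rr) rr hr2') with h1 | h1
  · -- scalar 1 : ψ (θ w) = 1
    have : ψ (θ w) = 1 := by
      apply Subtype.ext
      rw [← hrs, h1]
      simp [Matrix.scalar_apply]
    have hθw : θ w = 1 := hψ (by rw [this, _root_.map_one])
    exact hθ (by rw [hθw, _root_.map_one])
  · -- scalar -1 : contradiction mod 4
    exfalso
    have h00 : (ψ (θ w)).1 0 0 = -1 := by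
      rw [← hrs, h1]
      simp [Matrix.scalar_apply]
    have hred : red (ψ (θ w)) = 1 := red_lift n (θ w)
    have := congrArg (fun A : Matrix.SpecialLinearGroup (Fin 2) (ZMod 4) => A.1 0 0) hred
    simp only [red, Matrix.SpecialLinearGroup.map_apply_coe, RingHom.mapMatrix_apply,
      Matrix.map_apply, h00, Matrix.SpecialLinearGroup.coe_one, Matrix.one_apply_eq] at this
    rw [map_neg, _root_.map_one] at this
    exact (by decide : ¬ (-1 : ZMod 4) = 1) this
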